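/- (Volume bound for the fiber set X_q) Let ψ = (ψ_p)_{p∈S} be a collection of approximating functions and let q = (q₁, …, q_n) ∈ ℤ_S^n be nonzero. Define X_q as the set of X = (x₁, …, x_n) ∈ ([0,1) × ∏_{p∈S_f} ℤ_p)^n for which there exists b ∈ ℤ_S such that |x₁q₁ + ⋯ + x_nq_n + b|_p ≤ ψ_p(‖q‖_p^n)^{1/m} for all p ∈ S (interpreting x_iq_i + b componentwise at each place). Then vol(X_q) ≤ 2n ∏_{p∈S} ψ_p(‖q‖_p^n)^{1/m}, where vol is the product of Lebesgue measure on [0,1)^n and the Haar measures on ℤ_p^n with total mass 1. -/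

import Mathlib

open MeasureTheory Matrix

noncomputable section

/-- `z` belongs to the ring of `S`-integers `ℤ_S = ℤ[1/P]`,
where `P` is the product of the finite primes in `S`. -/
def IsZS (P : ℕ) (z : ℚ) : Prop := ∃ (a : ℤ) (k : ℕ), z = (a : ℚ) / (P : ℚ) ^ k

/-- A collection of approximating functions `ψ = (ψ_p)_{p ∈ S}`:
each `ψ_p : ℝ_{>0} → ℝ_{>0}` is non-increasing and `≡ 1` on `(0,1]`
(we extend by `1` on `t ≤ 1`); moreover for each finite place `p`,
`ψ_p` is constant on `{p^{kn}, …, p^{kn+n-1}}` for every `k ∈ ℤ` and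
takes values in `p^{mℤ}` on `p^ℤ`. -/
structure ApproxFamily (m n s : ℕ) (p : Fin s → ℕ) : Type where
  psiR : ℝ → ℝ
  psiP : Fin s → ℝ → ℝ
  posR : ∀ t, 0 < psiR t
  antiR : ∀ ⦃t₁ t₂ : ℝ⦄, 0 < t₁ → t₁ ≤ t₂ → psiR t₂ ≤ psiR t₁
  oneR : ∀ ⦃t : ℝ⦄, t ≤ 1 → psiR t = 1
  posP : ∀ i t, 0 < psiP i t
  antiP : ∀ i ⦃t₁ t₂ : ℝ⦄, 0 < t₁ → t₁ ≤ t₂ → psiP i t₂ ≤ psiP i t₁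
  oneP : ∀ i ⦃t : ℝ⦄, t ≤ 1 → psiP i t = 1
  constP : ∀ i (k : ℤ) (j : ℕ), j < n →
    psiP i ((p i : ℝ) ^ (k * n + j : ℤ)) = psiP i ((p i : ℝ) ^ (k * n : ℤ))
  valsP : ∀ i (k : ℤ), ∃ l : ℤ, psiP i ((p i : ℝ) ^ k) = (p i : ℝ) ^ (m * l : ℤ)

/-- The real components of the diagonal embedding of a rational vector. -/
def ratR {k : ℕ} (q : Fin k → ℚ) : Fin k → ℝ := fun j => (q j : ℝ)

/-- The `p i`-adic components of the diagonal embedding of a rational vector. -/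
def ratP {s : ℕ} (p : Fin s → ℕ) [∀ i, Fact (p i).Prime] {k : ℕ} (i : Fin s)
    (q : Fin k → ℚ) : Fin k → ℚ_[p i] := fun j => (q j : ℚ_[p i])

/-- The region `E_f(T) ⊆ ℚ_S^m × ℚ_S^n` cut out by `‖x‖_p^m ≤ f_p(‖y‖_p^n)` and
`‖y‖_p^n ≤ T_p` for all `p ∈ S` (product coordinates). -/
def Eprod (m n : ℕ) {s : ℕ} (p : Fin s → ℕ) [∀ i, Fact (p i).Prime]
    (fR : ℝ → ℝ) (fP : Fin s → ℝ → ℝ) (TR : ℝ) (TP : Fin s → ℝ) :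
    Set (((Fin m → ℝ) × ∀ i, Fin m → ℚ_[p i]) × ((Fin n → ℝ) × ∀ i, Fin n → ℚ_[p i])) :=
  {xy | ‖xy.1.1‖ ^ m ≤ fR (‖xy.2.1‖ ^ n) ∧ ‖xy.2.1‖ ^ n ≤ TR ∧
      ∀ i, ‖xy.1.2 i‖ ^ m ≤ fP i (‖xy.2.2 i‖ ^ n) ∧ ‖xy.2.2 i‖ ^ n ≤ TP i}

/-- The region `E_f(T) ⊆ ℚ_S^{m+n}`, where the first `m` coordinates play the role of
`x` and the last `n` coordinates the role of `y`. -/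
def Efull (m n : ℕ) {s : ℕ} (p : Fin s → ℕ) [∀ i, Fact (p i).Prime]
    (fR : ℝ → ℝ) (fP : Fin s → ℝ → ℝ) (TR : ℝ) (TP : Fin s → ℝ) :
    Set ((Fin (m + n) → ℝ) × ∀ i, Fin (m + n) → ℚ_[p i]) :=
  {v | ‖fun a : Fin m => v.1 (Fin.castAdd n a)‖ ^ m
        ≤ fR (‖fun b : Fin n => v.1 (Fin.natAdd m b)‖ ^ n) ∧
      ‖fun b : Fin n => v.1 (Fin.natAdd m b)‖ ^ n ≤ TR ∧
      ∀ i, ‖fun a : Fin m => v.2 i (Fin.castAdd n a)‖ ^ m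
            ≤ fP i (‖fun b : Fin n => v.2 i (Fin.natAdd m b)‖ ^ n) ∧
          ‖fun b : Fin n => v.2 i (Fin.natAdd m b)‖ ^ n ≤ TP i}

/-- The operator norm of a real matrix acting on sup-normed spaces. -/
def opNorm {k l : ℕ} (M : Matrix (Fin k) (Fin l) ℝ) : ℝ :=
  ‖LinearMap.toContinuousLinearMap M.mulVecLin‖

/-- An element of the group `𝐇 = ∏_{p ∈ S} H_p` of block lower-triangular matrices,
given by its blocks at each place. -/
structure HElem (m n : ℕ) (s : ℕ) (p : Fin s → ℕ) [∀ i, Fact (p i).Prime] : Type where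
  aR : Matrix (Fin m) (Fin m) ℝ
  bR : Matrix (Fin n) (Fin m) ℝ
  cR : Matrix (Fin n) (Fin n) ℝ
  aP : ∀ i, Matrix (Fin m) (Fin m) ℚ_[p i]
  bP : ∀ i, Matrix (Fin n) (Fin m) ℚ_[p i]
  cP : ∀ i, Matrix (Fin n) (Fin n) ℚ_[p i]

/-- The action of an element of `𝐇` on `ℚ_S^m × ℚ_S^n`:
`h·(x, y) = (α x, β x + γ y)` at each place. -/
def HElem.act {m n s : ℕ} {p : Fin s → ℕ} [∀ i, Fact (p i).Prime] (h : HElem m n s p)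
    (xy : ((Fin m → ℝ) × ∀ i, Fin m → ℚ_[p i]) × ((Fin n → ℝ) × ∀ i, Fin n → ℚ_[p i])) :
    ((Fin m → ℝ) × ∀ i, Fin m → ℚ_[p i]) × ((Fin n → ℝ) × ∀ i, Fin n → ℚ_[p i]) :=
  ((h.aR.mulVec xy.1.1, fun i => (h.aP i).mulVec (xy.1.2 i)),
   (h.bR.mulVec xy.1.1 + h.cR.mulVec xy.2.1,
    fun i => (h.bP i).mulVec (xy.1.2 i) + (h.cP i).mulVec (xy.2.2 i)))

/-- Membership in `H̃_{∞,ε}`: operator norm bounds on the blocks. -/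
def inHtilde (m n : ℕ) (ε : ℝ) (α : Matrix (Fin m) (Fin m) ℝ) (β : Matrix (Fin n) (Fin m) ℝ)
    (γ : Matrix (Fin n) (Fin n) ℝ) : Prop :=
  opNorm α ^ m ≤ 1 + ε ∧ opNorm γ ^ n ≤ 1 + ε / 2 ∧ opNorm β ≤ ε / (4 * n)

/-- `h ∈ (H̃_{∞,ε} ∩ H̃_{∞,ε}⁻¹) × ∏_{p ∈ S_f} H_p(ℤ_p)`. -/
def HElem.isAdmissible {m n s : ℕ} {p : Fin s → ℕ} [∀ i, Fact (p i).Prime]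
    (h : HElem m n s p) (ε : ℝ) : Prop :=
  IsUnit h.aR.det ∧ IsUnit h.cR.det ∧
  inHtilde m n ε h.aR h.bR h.cR ∧
  inHtilde m n ε h.aR⁻¹ (-(h.cR⁻¹ * h.bR * h.aR⁻¹)) h.cR⁻¹ ∧
  ∀ i, ((∀ a b, ‖h.aP i a b‖ ≤ 1) ∧ ‖(h.aP i).det‖ = 1) ∧
      ((∀ a b, ‖h.cP i a b‖ ≤ 1) ∧ ‖(h.cP i).det‖ = 1) ∧
      (∀ a b, ‖h.bP i a b‖ ≤ 1)

end


open scoped ENNReal NNReal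

section AuxVBFS

lemma zs_int {s : ℕ} (p : Fin s → ℕ) [hp : ∀ i, Fact (p i).Prime]
    (hpinj : Function.Injective p) (A : ℤ) (k : ℕ)
    (h : ∀ i, ‖(((A : ℚ) / ((∏ i, p i : ℕ) : ℚ) ^ k : ℚ) : ℚ_[p i])‖ ≤ 1) :
    ∃ t : ℤ, (A : ℚ) / ((∏ i, p i : ℕ) : ℚ) ^ k = (t : ℚ) := by
  have hPpos : 0 < (∏ i, p i : ℕ) := Finset.prod_pos fun i _ => (hp i).out.pos
  have hPne : ((∏ i, p i : ℕ) : ℚ) ≠ 0 := by positivity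
  -- each p i ^ k divides A
  have hdvd : ∀ i, ((p i : ℤ)) ^ k ∣ A := by
    intro i
    have hcast : (((A : ℚ) / ((∏ i, p i : ℕ) : ℚ) ^ k : ℚ) : ℚ_[p i])
        = (A : ℚ_[p i]) / ((∏ j, (p j : ℚ_[p i])) ^ k) := by
      push_cast
      ring
    have hnorm1 : ∀ j, j ≠ i → ‖((p j : ℤ) : ℚ_[p i])‖ = 1 := by
      intro j hj
      have hle := Padic.norm_int_le_one (p := p i) (p j : ℤ)
      have hnd : ¬ ((p i : ℤ) ∣ (p j : ℤ)) := by
        rw [Int.natCast_dvd_natCast]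
        intro hd
        have := (Nat.prime_dvd_prime_iff_eq (hp i).out (hp j).out).mp hd
        exact hj (hpinj this).symm
      have := (Padic.norm_intCast_lt_one_iff (p := p i) (k := (p j : ℤ))).not.mpr hnd
      push_neg at this
      linarith
    have hprod : ‖∏ j, (p j : ℚ_[p i])‖ = (p i : ℝ)⁻¹ := by
      rw [norm_prod, ← Finset.prod_erase_mul _ _ (Finset.mem_univ i)]
      have : ∀ j ∈ Finset.univ.erase i, ‖(p j : ℚ_[p i])‖ = 1 := by
        intro j hj
        have := hnorm1 j (Finset.ne_of_mem_erase hj)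
        simpa using this
      rw [Finset.prod_congr rfl this, Finset.prod_const_one, one_mul, Padic.norm_p]
    have hA : ‖((A : ℤ) : ℚ_[p i])‖ ≤ (p i : ℝ) ^ (-(k : ℤ)) := by
      have h1 := h i
      rw [hcast, norm_div, norm_pow, hprod] at h1
      have hppos : (0:ℝ) < (p i : ℝ) := by exact_mod_cast (hp i).out.pos
      have h2 : ((p i : ℝ)⁻¹) ^ k ≠ 0 := by positivity
      rw [div_le_one (by positivity)] at h1
      calc ‖((A : ℤ) : ℚ_[p i])‖ = ‖(A : ℚ_[p i])‖ := by push_cast; rfl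
        _ ≤ ((p i : ℝ)⁻¹) ^ k := by simpa using h1
        _ = (p i : ℝ) ^ (-(k : ℤ)) := by
            rw [_root_.zpow_neg, zpow_natCast, inv_pow]
    exact (Padic.norm_int_le_pow_iff_dvd (p := p i) A k).mp (by simpa using hA)
  have hcop : (Set.Pairwise ↑(Finset.univ : Finset (Fin s))
      (Function.onFun IsCoprime fun i => ((p i : ℤ)) ^ k)) := by
    intro i _ j hij hne
    simp only [Function.onFun]
    apply IsCoprime.pow
    rw [Int.isCoprime_iff_gcd_eq_one, Int.gcd_natCast_natCast]
    exact (Nat.coprime_primes (hp i).out (hp j).out).mpr fun h => hne (hpinj h)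
  have hPdvd : (∏ i, ((p i : ℤ)) ^ k) ∣ A := Finset.prod_dvd_of_coprime hcop fun i _ => hdvd i
  obtain ⟨t, ht⟩ := hPdvd
  refine ⟨t, ?_⟩
  have hne : (∏ x : Fin s, ((p x : ℚ)) ^ k) ≠ 0 := by
    apply Finset.prod_ne_zero_iff.mpr
    intro i _
    exact pow_ne_zero _ (by exact_mod_cast (hp i).out.ne_zero)
  have : ((∏ i, p i : ℕ) : ℚ) ^ k = ∏ x : Fin s, ((p x : ℚ)) ^ k := by
    push_cast
    rw [← Finset.prod_pow]
  rw [this, ht]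
  push_cast
  rw [mul_comm, mul_div_assoc, div_self hne, mul_one]


lemma zs_coset {s : ℕ} (p : Fin s → ℕ) [hp : ∀ i, Fact (p i).Prime]
    (hpinj : Function.Injective p) (z : ℚ) (hz : IsZS (∏ i, p i) z)
    (g : Fin s → ℤ) (h : ∀ i, ‖(z : ℚ_[p i])‖ ≤ (p i : ℝ) ^ (g i)) :
    ∃ t : ℤ, z = (∏ i, (p i : ℚ) ^ (-(g i))) * t := by
  obtain ⟨a, k, hza⟩ := hz
  have hpne : ∀ j, (p j : ℚ) ≠ 0 := fun j => by exact_mod_cast (hp j).out.ne_zero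
  have hPne : ((∏ i, p i : ℕ) : ℚ) ≠ 0 := by
    push_cast; exact Finset.prod_ne_zero_iff.mpr fun j _ => hpne j
  set K : ℕ := ∑ i, (-(g i)).toNat with hK
  have hgK : ∀ i, 0 ≤ g i + K := by
    intro i
    have h1 : (-(g i)).toNat ≤ K :=
      Finset.single_le_sum (f := fun j => (-(g j)).toNat) (fun j _ => Nat.zero_le _)
        (Finset.mem_univ i)
    have h2 : -(g i) ≤ ((-(g i)).toNat : ℤ) := Int.self_le_toNat _
    omega
  set e : Fin s → ℕ := fun i => (g i + K).toNat with he
  set w : ℚ := z * ∏ i, (p i : ℚ) ^ (g i) with hw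
  set A : ℤ := a * ∏ i, (p i : ℤ) ^ (e i) with hA
  have hwA : w = (A : ℚ) / ((∏ i, p i : ℕ) : ℚ) ^ (k + K) := by
    rw [eq_div_iff (by positivity)]
    have hzP : z * ((∏ i, p i : ℕ) : ℚ) ^ k = a := by
      rw [hza, div_mul_cancel₀ _ (by positivity)]
    have hPK : ((∏ i, p i : ℕ) : ℚ) ^ K = ∏ i, (p i : ℚ) ^ (K : ℤ) := by
      push_cast
      rw [← Finset.prod_pow]
      exact Finset.prod_congr rfl fun i _ => (zpow_natCast _ _).symm
    calc w * ((∏ i, p i : ℕ) : ℚ) ^ (k + K)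
        = (z * ((∏ i, p i : ℕ) : ℚ) ^ k) *
          ((∏ i, (p i : ℚ) ^ (g i)) * ((∏ i, p i : ℕ) : ℚ) ^ K) := by
          rw [hw, pow_add]; ring
      _ = a * ∏ i, ((p i : ℚ) ^ (g i) * (p i : ℚ) ^ (K : ℤ)) := by
          rw [hzP, hPK, ← Finset.prod_mul_distrib]
      _ = a * ∏ i, (p i : ℚ) ^ (e i) := by
          congr 1
          refine Finset.prod_congr rfl fun i _ => ?_
          rw [← zpow_add₀ (hpne i), ← zpow_natCast]
          congr 1
          rw [he]
          simp [Int.toNat_of_nonneg (hgK i)]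
      _ = (A : ℚ) := by rw [hA]; push_cast; ring
  have hnorm1 : ∀ i j, j ≠ i → ‖((p j : ℚ) : ℚ_[p i])‖ = 1 := by
    intro i j hj
    have : ((p j : ℚ) : ℚ_[p i]) = ((p j : ℤ) : ℚ_[p i]) := by push_cast; rfl
    rw [this]
    have hle := Padic.norm_int_le_one (p := p i) (p j : ℤ)
    have hnd : ¬ ((p i : ℤ) ∣ (p j : ℤ)) := by
      rw [Int.natCast_dvd_natCast]
      intro hd
      exact hj (hpinj ((Nat.prime_dvd_prime_iff_eq (hp i).out (hp j).out).mp hd)).symm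
    have := (Padic.norm_intCast_lt_one_iff (p := p i) (k := (p j : ℤ))).not.mpr hnd
    push_neg at this
    linarith
  have hwnorm : ∀ i, ‖((w : ℚ) : ℚ_[p i])‖ ≤ 1 := by
    intro i
    have hcast : ((w : ℚ) : ℚ_[p i]) = (z : ℚ_[p i]) * ∏ j, ((p j : ℚ) : ℚ_[p i]) ^ (g j) := by
      rw [hw]; push_cast; ring
    rw [hcast, norm_mul, norm_prod]
    have hprod : (∏ j, ‖((p j : ℚ) : ℚ_[p i]) ^ (g j)‖) = ((p i : ℝ))⁻¹ ^ (g i) := by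
      rw [← Finset.prod_erase_mul _ _ (Finset.mem_univ i)]
      have h1 : ∀ j ∈ Finset.univ.erase i, ‖((p j : ℚ) : ℚ_[p i]) ^ (g j)‖ = 1 := by
        intro j hj
        rw [norm_zpow, hnorm1 i j (Finset.ne_of_mem_erase hj), _root_.one_zpow]
      rw [Finset.prod_congr rfl h1, Finset.prod_const_one, one_mul, norm_zpow]
      congr 1
      have : ((p i : ℚ) : ℚ_[p i]) = ((p i : ℕ) : ℚ_[p i]) := by push_cast; rfl
      rw [this, Padic.norm_p]
    rw [hprod]
    have hple : (1:ℝ) < (p i : ℝ) := by exact_mod_cast (hp i).out.one_lt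
    calc ‖(z : ℚ_[p i])‖ * ((p i : ℝ))⁻¹ ^ (g i)
        ≤ (p i : ℝ) ^ (g i) * ((p i : ℝ))⁻¹ ^ (g i) := by
          apply mul_le_mul_of_nonneg_right (h i)
          positivity
      _ = 1 := by
          rw [_root_.inv_zpow, ← _root_.zpow_neg, ← zpow_add₀ (by positivity : (p i:ℝ) ≠ 0)]
          simp
  obtain ⟨t, ht⟩ := zs_int p hpinj A (k + K) (fun i => by rw [← hwA]; exact hwnorm i)
  refine ⟨t, ?_⟩
  have hzw : z = w * ∏ i, (p i : ℚ) ^ (-(g i)) := by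
    rw [hw, mul_assoc, ← Finset.prod_mul_distrib]
    have : ∀ i ∈ Finset.univ, (p i : ℚ) ^ (g i) * (p i : ℚ) ^ (-(g i)) = 1 := by
      intro i _
      rw [← zpow_add₀ (hpne i)]
      simp
    rw [Finset.prod_congr rfl this, Finset.prod_const_one, mul_one]
  rw [hzw, hwA, ht]
  ring

lemma IsZS_sub {P : ℕ} (hP : 0 < P) {a b : ℚ} (ha : IsZS P a) (hb : IsZS P b) :
    IsZS P (a - b) := by
  obtain ⟨x, k, rfl⟩ := ha
  obtain ⟨y, l, rfl⟩ := hb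
  refine ⟨x * P^l - y * P^k, k + l, ?_⟩
  have hPne : ((P:ℚ)) ≠ 0 := by positivity
  field_simp
  push_cast; ring

lemma padic_fiber_bound {P : ℕ} [hp : Fact P.Prime] {n : ℕ}
    [MeasurableSpace ℚ_[P]] [BorelSpace ℚ_[P]]
    (μ : Measure (Fin n → ℚ_[P])) [μ.IsAddHaarMeasure]
    (hμ : μ {y | ∀ j, ‖y j‖ ≤ 1} = 1)
    (q : Fin n → ℚ_[P]) (j₁ : Fin n) (c : ℚ_[P]) (δ : ℝ) (hδ : 0 < δ) (k : ℕ)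
    (hsep : (P:ℝ)^k * δ ≤ ‖q j₁‖) :
    μ {y | (∀ j, ‖y j‖ ≤ 1) ∧ ‖∑ j, y j * q j + c‖ ≤ δ} ≤ (((P:ℝ≥0∞))^k)⁻¹ := by
  set S : Set (Fin n → ℚ_[P]) := {y | (∀ j, ‖y j‖ ≤ 1) ∧ ‖∑ j, y j * q j + c‖ ≤ δ} with hS
  have hmeas1 : MeasurableSet {y : Fin n → ℚ_[P] | ∀ j, ‖y j‖ ≤ 1} := by
    rw [Set.setOf_forall]
    exact MeasurableSet.iInter fun j =>
      measurableSet_le ((continuous_norm.comp (continuous_apply j)).measurable)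
        measurable_const
  have hmeasS : MeasurableSet S := by
    apply hmeas1.inter
    exact measurableSet_le
      ((continuous_norm.comp ((continuous_finset_sum _ fun j _ =>
        (continuous_apply j).mul continuous_const).add continuous_const)).measurable)
      measurable_const
  set v : ℕ → (Fin n → ℚ_[P]) := fun r => Pi.single j₁ ((r : ℚ_[P])) with hv
  set T : ℕ → Set (Fin n → ℚ_[P]) := fun r => (fun y => y - v r) ⁻¹' S with hT
  have hTm : ∀ r, μ (T r) = μ S := by
    intro r
    have : (fun y : Fin n → ℚ_[P] => y - v r) = fun y => y + (-(v r)) := by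
      funext y; simp [sub_eq_add_neg]
    rw [hT]
    simp only [this]
    exact measure_preimage_add_right μ (-(v r)) S
  have hsub : ∀ r, T r ⊆ {y | ∀ j, ‖y j‖ ≤ 1} := by
    intro r y hy j
    have h1 : ‖y j - v r j‖ ≤ 1 := hy.1 j
    have h2 : ‖v r j‖ ≤ 1 := by
      rw [hv]
      rcases eq_or_ne j j₁ with rfl | hne
      · simp only [Pi.single_eq_same]
        have : ((r : ℚ_[P])) = ((r : ℤ) : ℚ_[P]) := by push_cast; rfl
        rw [this]; exact Padic.norm_int_le_one _
      · simp [Pi.single_eq_of_ne hne]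
    calc ‖y j‖ = ‖(y j - v r j) + v r j‖ := by ring_nf
      _ ≤ max ‖y j - v r j‖ ‖v r j‖ := Padic.nonarchimedean _ _
      _ ≤ 1 := max_le h1 h2
  have hdisj : (↑(Finset.range (P^k)) : Set ℕ).PairwiseDisjoint T := by
    intro r hr r' hr' hne
    simp only [Finset.coe_range, Set.mem_Iio] at hr hr'
    rw [Function.onFun, Set.disjoint_left]
    intro z hz hz'
    set a : ℚ_[P] := ∑ j, (z j - v r j) * q j + c with ha
    set b : ℚ_[P] := ∑ j, (z j - v r' j) * q j + c with hb
    have h1 : ‖a‖ ≤ δ := hz.2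
    have h2 : ‖b‖ ≤ δ := hz'.2
    have hdiff : a - b = ((r' : ℚ_[P]) - r) * q j₁ := by
      rw [ha, hb]
      rw [add_sub_add_comm, sub_self, add_zero, ← Finset.sum_sub_distrib]
      have : ∀ j, (z j - v r j) * q j - (z j - v r' j) * q j = (v r' j - v r j) * q j := by
        intro j; ring
      simp only [this, hv]
      rw [Finset.sum_eq_single j₁]
      · simp [Pi.single_eq_same]; ring
      · intro j _ hne'; simp [Pi.single_eq_of_ne hne']
      · intro h; exact absurd (Finset.mem_univ j₁) h
    have hPk : ((P:ℝ)^k) ≠ 0 := by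
      have := hp.out.pos
      have : (0:ℝ) < (P:ℝ) := by exact_mod_cast this
      positivity
    have hlow : ((P:ℝ)^k)⁻¹ < ‖(r' : ℚ_[P]) - r‖ := by
      have hcast : ((r' : ℚ_[P]) - r) = (((r' : ℤ) - r : ℤ) : ℚ_[P]) := by push_cast; ring
      rw [hcast]
      by_contra hle
      push_neg at hle
      have hle' : ‖(((r' : ℤ) - r : ℤ) : ℚ_[P])‖ ≤ (P:ℝ) ^ (-(k:ℤ)) := by
        rw [_root_.zpow_neg, zpow_natCast]
        exact hle
      have habs : ((P:ℤ))^k ∣ ((r' : ℤ) - r) :=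
        (Padic.norm_int_le_pow_iff_dvd (p := P) ((r' : ℤ) - r) k).mp hle'
      have hrz : (r : ℤ) < ((P^k : ℕ) : ℤ) := by exact_mod_cast hr
      have hrz' : (r' : ℤ) < ((P^k : ℕ) : ℤ) := by exact_mod_cast hr'
      have hcastP : ((P:ℤ))^k = ((P^k : ℕ) : ℤ) := by push_cast; rfl
      have hz0 : ((r' : ℤ) - r) = 0 := by
        apply Int.eq_zero_of_abs_lt_dvd habs
        rw [hcastP, abs_sub_lt_iff]
        omega
      exact hne (by omega)
    have hApos : 0 < ‖q j₁‖ := by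
      refine lt_of_lt_of_le ?_ hsep
      have h0 : (0:ℝ) < (P:ℝ)^k := lt_of_le_of_ne (by positivity) (Ne.symm hPk)
      exact mul_pos h0 hδ
    have hgt : δ < ‖((r' : ℚ_[P]) - r) * q j₁‖ := by
      rw [norm_mul]
      calc δ = (P:ℝ)^k * δ * ((P:ℝ)^k)⁻¹ := by
            rw [mul_comm ((P:ℝ)^k) δ, mul_assoc, mul_inv_cancel₀ hPk, mul_one]
        _ ≤ ‖q j₁‖ * ((P:ℝ)^k)⁻¹ := by
            apply mul_le_mul_of_nonneg_right hsep
            positivity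
        _ < ‖q j₁‖ * ‖(r' : ℚ_[P]) - r‖ := by
            exact mul_lt_mul_of_pos_left hlow hApos
        _ = ‖(r' : ℚ_[P]) - r‖ * ‖q j₁‖ := by ring
    have : ‖((r' : ℚ_[P]) - r) * q j₁‖ ≤ δ := by
      rw [← hdiff]
      have hna : ‖a - b‖ ≤ max ‖a‖ ‖b‖ := by
        have := Padic.nonarchimedean (q := a) (r := -b)
        simpa [sub_eq_add_neg] using this
      exact le_trans hna (max_le h1 h2)
    linarith
  have hmeasT : ∀ r ∈ Finset.range (P^k), MeasurableSet (T r) := by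
    intro r _
    apply hmeasS.preimage
    exact measurable_id.sub measurable_const
  have hunion : μ (⋃ r ∈ Finset.range (P^k), T r) ≤ 1 := by
    rw [← hμ]
    apply measure_mono
    intro y hy
    simp only [Set.mem_iUnion] at hy
    obtain ⟨r, _, hr⟩ := hy
    exact hsub r hr
  rw [measure_biUnion_finset hdisj hmeasT] at hunion
  simp only [hTm, Finset.sum_const, Finset.card_range, nsmul_eq_mul] at hunion
  have hN : ((P^k : ℕ) : ℝ≥0∞) ≠ 0 := by
    have : (P:ℕ)^k ≠ 0 := pow_ne_zero _ hp.out.ne_zero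
    exact_mod_cast this
  have hNtop : ((P^k : ℕ) : ℝ≥0∞) ≠ ⊤ := ENNReal.natCast_ne_top _
  calc μ S = (((P^k : ℕ)) : ℝ≥0∞)⁻¹ * (((P^k : ℕ) : ℝ≥0∞)) * μ S := by
        rw [ENNReal.inv_mul_cancel hN hNtop, one_mul]
    _ = (((P^k : ℕ)) : ℝ≥0∞)⁻¹ * ((((P^k : ℕ)) : ℝ≥0∞) * μ S) := by ring
    _ ≤ (((P^k : ℕ)) : ℝ≥0∞)⁻¹ * 1 := by
        apply mul_le_mul_right
        exact_mod_cast hunion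
    _ = ((P:ℝ≥0∞)^k)⁻¹ := by
        rw [mul_one]
        congr 1
        push_cast
        rfl

lemma interval_tsum_bound (a s L : ℝ) (M : ℕ) (hM : 0 < M) (hs : 0 < s)
    (hMs : (M:ℝ) * s = 1) (hL : 0 ≤ L) :
    ∑' k : ℤ, volume (Set.Ico (0:ℝ) 1 ∩ Set.Icc (a + k*s) (a + k*s + L))
      ≤ ENNReal.ofReal (M * L) := by
  set J : Set ℝ := Set.Icc a (a + L) with hJ
  have hstep : ∀ k : ℤ, volume (Set.Ico (0:ℝ) 1 ∩ Set.Icc (a + k*s) (a + k*s + L))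
      = volume (Set.Ico (-(k*s)) (1 - k*s) ∩ J) := by
    intro k
    have hset : Set.Ico (-(k*s):ℝ) (1 - k*s) ∩ J
        = (fun x => x + k*s) ⁻¹' (Set.Ico (0:ℝ) 1 ∩ Set.Icc (a + k*s) (a + k*s + L)) := by
      ext x
      simp only [Set.mem_inter_iff, Set.mem_Ico, Set.mem_Icc, Set.mem_preimage, hJ]
      constructor
      · rintro ⟨⟨h1, h2⟩, h3, h4⟩
        exact ⟨⟨by linarith, by linarith⟩, by linarith, by linarith⟩
      · rintro ⟨⟨h1, h2⟩, h3, h4⟩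
        exact ⟨⟨by linarith, by linarith⟩, by linarith, by linarith⟩
    rw [← measure_preimage_add_right volume ((k:ℝ)*s)
      (Set.Ico (0:ℝ) 1 ∩ Set.Icc (a + k*s) (a + k*s + L)), ← hset]
  simp only [hstep]
  have hmeas : ∀ k : ℤ, MeasurableSet (Set.Ico (-(k*s):ℝ) (1 - k*s) ∩ J) :=
    fun k => measurableSet_Ico.inter measurableSet_Icc
  have hlint : ∀ k : ℤ, volume (Set.Ico (-(k*s):ℝ) (1 - k*s) ∩ J)
      = ∫⁻ x, (Set.Ico (-(k*s):ℝ) (1 - k*s) ∩ J).indicator (fun _ => (1:ℝ≥0∞)) x := by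
    intro k
    rw [lintegral_indicator_const (hmeas k), one_mul]
  simp only [hlint]
  rw [← lintegral_tsum (fun k => ((measurable_const).indicator (hmeas k)).aemeasurable)]
  have hpt : ∀ x : ℝ, (∑' k : ℤ,
      (Set.Ico (-(k*s):ℝ) (1 - k*s) ∩ J).indicator (fun _ => (1:ℝ≥0∞)) x)
      ≤ J.indicator (fun _ => (M:ℝ≥0∞)) x := by
    intro x
    by_cases hxJ : x ∈ J
    · rw [Set.indicator_of_mem hxJ]
      set F : Finset ℤ := Finset.Icc ⌈-x/s⌉ (⌈-x/s⌉ + M - 1) with hF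
      have hout : ∀ k ∉ F, (Set.Ico (-(k*s):ℝ) (1 - k*s) ∩ J).indicator
          (fun _ => (1:ℝ≥0∞)) x = 0 := by
        intro k hk
        rw [Set.indicator_of_notMem]
        intro ⟨⟨h1, h2⟩, _⟩
        apply hk
        rw [hF, Finset.mem_Icc]
        constructor
        · rw [Int.ceil_le]
          rw [div_le_iff₀ hs]
          push_cast
          linarith
        · have : ((k - M : ℤ) : ℝ) < -x/s := by
            rw [lt_div_iff₀ hs]
            push_cast
            have : (k:ℝ)*s - (M:ℝ)*s < -x := by linarith
            linarith [this]
          have h5 : (k - M : ℤ) < ⌈-x/s⌉ := Int.lt_ceil.mpr this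
          omega
      calc (∑' k : ℤ, (Set.Ico (-(k*s):ℝ) (1 - k*s) ∩ J).indicator (fun _ => (1:ℝ≥0∞)) x)
          = ∑ k ∈ F, (Set.Ico (-(k*s):ℝ) (1 - k*s) ∩ J).indicator (fun _ => (1:ℝ≥0∞)) x :=
            tsum_eq_sum hout
        _ ≤ ∑ k ∈ F, 1 := by
            apply Finset.sum_le_sum
            intro k _
            classical
            rw [Set.indicator_apply]
            split <;> simp
        _ = (F.card : ℝ≥0∞) := by simp
        _ ≤ (M : ℝ≥0∞) := by
            rw [hF, Int.card_Icc]
            norm_cast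
            omega
    · have : ∀ k : ℤ, (Set.Ico (-(k*s):ℝ) (1 - k*s) ∩ J).indicator (fun _ => (1:ℝ≥0∞)) x
          = 0 := by
        intro k
        rw [Set.indicator_of_notMem]
        intro ⟨_, h⟩
        exact hxJ h
      simp [this, Set.indicator_of_notMem hxJ]
  calc (∫⁻ x, ∑' k : ℤ,
        (Set.Ico (-(k*s):ℝ) (1 - k*s) ∩ J).indicator (fun _ => (1:ℝ≥0∞)) x)
      ≤ ∫⁻ x, J.indicator (fun _ => (M:ℝ≥0∞)) x := lintegral_mono hpt
    _ = (M:ℝ≥0∞) * volume J := lintegral_indicator_const measurableSet_Icc _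
    _ = (M:ℝ≥0∞) * ENNReal.ofReal L := by rw [hJ, Real.volume_Icc]; ring_nf
    _ = ENNReal.ofReal (M * L) := by
        rw [ENNReal.ofReal_mul (by positivity)]
        congr 1
        simp [ENNReal.ofReal_natCast]

lemma affine_tsum_bound_pos (q₀ β c₀ δ : ℝ) (M : ℕ) (hM : 0 < M) (hc : 0 < c₀)
    (hq : q₀ = M * c₀) (hδ : 0 ≤ δ) :
    ∑' k : ℤ, volume {t : ℝ | t ∈ Set.Ico (0:ℝ) 1 ∧ |t*q₀ + (β + c₀*k)| ≤ δ}
      ≤ ENNReal.ofReal (2*δ/c₀) := by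
  have hq0 : 0 < q₀ := by rw [hq]; positivity
  have hre := ((Equiv.neg ℤ).tsum_eq
      (fun k : ℤ => volume {t : ℝ | t ∈ Set.Ico (0:ℝ) 1 ∧ |t*q₀ + (β + c₀*k)| ≤ δ}))
  simp only [Equiv.neg_apply, Int.cast_neg] at hre
  rw [← hre]
  have hset : ∀ k : ℤ, {t : ℝ | t ∈ Set.Ico (0:ℝ) 1 ∧ |t*q₀ + (β + c₀*(-k))| ≤ δ}
      = Set.Ico (0:ℝ) 1 ∩ Set.Icc ((-β-δ)/q₀ + k*(c₀/q₀)) ((-β-δ)/q₀ + k*(c₀/q₀) + 2*δ/q₀) := by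
    intro k
    have hqne : q₀ ≠ 0 := ne_of_gt hq0
    have e1 : (-β-δ)/q₀ + k*(c₀/q₀) = (-β-δ+c₀*k)/q₀ := by field_simp
    have e2 : (-β-δ+c₀*k)/q₀ + 2*δ/q₀ = (-β+δ+c₀*k)/q₀ := by field_simp; ring
    ext t
    simp only [Set.mem_setOf_eq, Set.mem_inter_iff, Set.mem_Icc, abs_le, e1, e2,
      div_le_iff₀ hq0, le_div_iff₀ hq0]
    constructor
    · rintro ⟨ht, h1, h2⟩
      exact ⟨ht, by linarith, by linarith⟩
    · rintro ⟨ht, h1, h2⟩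
      exact ⟨ht, by linarith, by linarith⟩
  simp only [hset]
  have := interval_tsum_bound ((-β-δ)/q₀) (c₀/q₀) (2*δ/q₀) M hM (by positivity)
    (by rw [hq]; field_simp) (by positivity)
  refine le_trans this ?_
  apply ENNReal.ofReal_le_ofReal
  apply le_of_eq
  rw [hq]
  have hMne : (M:ℝ) ≠ 0 := by positivity
  field_simp

lemma affine_tsum_bound (q₀ β c₀ δ : ℝ) (M : ℕ) (hM : 0 < M) (hc : 0 < c₀)
    (hq : |q₀| = M * c₀) (hδ : 0 ≤ δ) :
    ∑' k : ℤ, volume {t : ℝ | t ∈ Set.Ico (0:ℝ) 1 ∧ |t*q₀ + (β + c₀*k)| ≤ δ}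
      ≤ ENNReal.ofReal (2*δ/c₀) := by
  have hq0 : q₀ ≠ 0 := by
    intro h
    rw [h, abs_zero] at hq
    have : (0:ℝ) < M * c₀ := by positivity
    linarith
  rcases lt_or_gt_of_ne hq0 with hneg | hpos
  · have habs : ∀ (t : ℝ) (k : ℤ), |t*q₀ + (β + c₀*k)| = |t*(-q₀) + (-β + c₀*(-k))| := by
      intro t k
      rw [← abs_neg]
      congr 1
      push_cast
      ring
    simp only [habs]
    have hre := (Equiv.neg ℤ).tsum_eq
        (fun k : ℤ => volume {t : ℝ | t ∈ Set.Ico (0:ℝ) 1 ∧ |t*(-q₀) + (-β + c₀*k)| ≤ δ})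
    simp only [Equiv.neg_apply, Int.cast_neg] at hre
    rw [hre]
    apply affine_tsum_bound_pos (-q₀) (-β) c₀ δ M hM hc ?_ hδ
    rw [← hq, abs_of_neg hneg]
  · apply affine_tsum_bound_pos q₀ β c₀ δ M hM hc ?_ hδ
    rw [← hq, abs_of_pos hpos]

end AuxVBFS

/-- **Volume bound for the fiber set `X_q`.**  For nonzero `q ∈ ℤ_S^n`,
the set `X_q` of `X ∈ ([0,1) × ∏_p ℤ_p)^n` for which there exists `b ∈ ℤ_S` with
`|x₁q₁ + ⋯ + x_nq_n + b|_p ≤ ψ_p(‖q‖_p^n)^{1/m}` at all places has volume at most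
`2n ∏_p ψ_p(‖q‖_p^n)^{1/m}`. -/
theorem volume_bound_fiber_set
    (m n : ℕ) (hm : 0 < m) (hn : 0 < n)
    (s : ℕ) (p : Fin s → ℕ) [∀ i, Fact (p i).Prime] (hpinj : Function.Injective p)
    [∀ i, MeasurableSpace ℚ_[p i]] [∀ i, BorelSpace ℚ_[p i]]
    (ψ : ApproxFamily m n s p)
    -- Haar measure on `ℚ_S^n`, normalized so that `ℤ_p^n` has measure one at each
    -- finite place:
    (μn : ∀ i, Measure (Fin n → ℚ_[p i])) [∀ i, (μn i).IsAddHaarMeasure]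
    (hμn : ∀ i, μn i {y | ∀ j, ‖y j‖ ≤ 1} = 1)
    (q : Fin n → ℚ) (hq : ∀ j, IsZS (∏ i, p i) (q j)) (hq0 : q ≠ 0) :
    ((volume : Measure (Fin n → ℝ)).prod (Measure.pi μn))
        {x : (Fin n → ℝ) × (∀ i, Fin n → ℚ_[p i]) |
          (∀ j, 0 ≤ x.1 j ∧ x.1 j < 1) ∧ (∀ i j, ‖x.2 i j‖ ≤ 1) ∧
          ∃ b : ℚ, IsZS (∏ i, p i) b ∧
            |∑ j, x.1 j * (q j : ℝ) + (b : ℝ)| ≤ ψ.psiR (‖ratR q‖ ^ n) ^ (1 / (m : ℝ)) ∧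
            ∀ i, ‖∑ j, x.2 i j * ((q j : ℚ) : ℚ_[p i]) + ((b : ℚ) : ℚ_[p i])‖
              ≤ ψ.psiP i (‖ratP p i q‖ ^ n) ^ (1 / (m : ℝ))}
      ≤ ENNReal.ofReal (2 * n * (ψ.psiR (‖ratR q‖ ^ n) ^ (1 / (m : ℝ))
          * ∏ i, ψ.psiP i (‖ratP p i q‖ ^ n) ^ (1 / (m : ℝ)))) := by
  classical
  obtain ⟨n', rfl⟩ : ∃ n', n = n' + 1 := ⟨n - 1, by omega⟩
  obtain ⟨j₀, hj₀⟩ : ∃ j₀, q j₀ ≠ 0 := by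
    by_contra h
    push_neg at h
    exact hq0 (funext h)
  have hfact : ∀ i, Fact (p i).Prime := ‹_›
  have hppos : ∀ i, (0:ℝ) < (p i : ℝ) := fun i => by exact_mod_cast (hfact i).out.pos
  have hp1 : ∀ i, (1:ℝ) ≤ (p i : ℝ) := fun i => by exact_mod_cast (hfact i).out.one_lt.le
  have hmne : (m:ℝ) ≠ 0 := by
    have : (0:ℝ) < m := by exact_mod_cast hm
    linarith
  set δR : ℝ := ψ.psiR (‖ratR q‖ ^ (n'+1)) ^ (1 / (m : ℝ)) with hδR
  have hδRpos : 0 < δR := Real.rpow_pos_of_pos (ψ.posR _) _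
  -- p-adic structure: at each finite place, the sup norm of q is an attained power of p,
  -- and the approximating function value is a power of p.
  have hpadic : ∀ i : Fin s, ∃ (vv ll : ℤ) (j₁ : Fin (n'+1)),
      ‖ratP p i q‖ = (p i : ℝ) ^ vv ∧ ‖((q j₁ : ℚ) : ℚ_[p i])‖ = (p i : ℝ) ^ vv ∧
      ψ.psiP i (‖ratP p i q‖ ^ (n'+1)) ^ (1 / (m : ℝ)) = (p i : ℝ) ^ ll := by
    intro i
    obtain ⟨j₁, -, hj₁⟩ := Finset.exists_mem_eq_sup (Finset.univ : Finset (Fin (n'+1)))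
      ⟨j₀, Finset.mem_univ j₀⟩ (fun j => ‖ratP p i q j‖₊)
    have hnorm : ‖ratP p i q‖ = ‖ratP p i q j₁‖ := by
      rw [Pi.norm_def, hj₁]
      rfl
    have hpos : 0 < ‖ratP p i q‖ := by
      have h1 : ‖ratP p i q j₀‖ ≤ ‖ratP p i q‖ := norm_le_pi_norm _ j₀
      have h2 : (0:ℝ) < ‖ratP p i q j₀‖ := by
        rw [norm_pos_iff]
        show ((q j₀ : ℚ) : ℚ_[p i]) ≠ 0
        exact_mod_cast hj₀
      linarith
    have hq1 : q j₁ ≠ 0 := by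
      intro h0
      rw [hnorm] at hpos
      have : ratP p i q j₁ = 0 := by
        show ((q j₁ : ℚ) : ℚ_[p i]) = 0
        rw [h0]; norm_num
      rw [this, norm_zero] at hpos
      exact lt_irrefl _ hpos
    set vv : ℤ := -padicValRat (p i) (q j₁) with hvv
    have hval : ‖ratP p i q j₁‖ = (p i : ℝ) ^ vv := by
      show ‖((q j₁ : ℚ) : ℚ_[p i])‖ = (p i : ℝ) ^ vv
      rw [Padic.eq_padicNorm, padicNorm.eq_zpow_of_nonzero hq1, hvv]
      push_cast
      rfl
    obtain ⟨ll, hll⟩ := ψ.valsP i (vv * ((n'+1 : ℕ) : ℤ))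
    refine ⟨vv, ll, j₁, hnorm.trans hval, hval, ?_⟩
    have hpow : ‖ratP p i q‖ ^ (n'+1) = (p i : ℝ) ^ (vv * ((n'+1 : ℕ) : ℤ)) := by
      rw [hnorm.trans hval, ← zpow_natCast ((p i:ℝ) ^ vv) (n'+1), ← _root_.zpow_mul]
    rw [hpow, hll]
    have hc1 : ((p i:ℝ) ^ (((m:ℕ):ℤ) * ll)) = (p i:ℝ) ^ (((((m:ℕ):ℤ) * ll : ℤ)) : ℝ) :=
      (Real.rpow_intCast _ _).symm
    rw [hc1, ← Real.rpow_mul (hppos i).le]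
    rw [show (((((m:ℕ):ℤ) * ll : ℤ)) : ℝ) * ((1:ℝ)/(m:ℝ)) = ((ll : ℤ) : ℝ) by
      push_cast; field_simp]
    exact Real.rpow_intCast _ _
  choose v l j1 hvA hvj hl using hpadic
  simp only [hl]
  set g : Fin s → ℤ := fun i => max (v i) (l i) with hg
  set cQ : ℚ := ∏ i, (p i : ℚ) ^ (-(g i)) with hcQ
  set cR : ℝ := ∏ i, (p i : ℝ) ^ (-(g i)) with hcR
  have hcQR : ((cQ : ℚ) : ℝ) = cR := by
    rw [hcQ, hcR]
    push_cast
    rfl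
  have hcRpos : 0 < cR := Finset.prod_pos fun i _ => zpow_pos (hppos i) _
  have hPpos : 0 < ∏ i, p i := Finset.prod_pos fun i _ => (hfact i).out.pos
  have hcoset : ∀ z : ℚ, IsZS (∏ i, p i) z →
      (∀ i, ‖(z : ℚ_[p i])‖ ≤ (p i : ℝ) ^ (g i)) → ∃ t : ℤ, z = cQ * t := by
    intro z hz hnorm
    obtain ⟨t, ht⟩ := zs_coset p hpinj z hz g hnorm
    exact ⟨t, by rw [ht, hcQ]⟩
  have hqnorm : ∀ i j, ‖((q j : ℚ) : ℚ_[p i])‖ ≤ (p i : ℝ) ^ (v i) := by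
    intro i j
    have h := norm_le_pi_norm (ratP p i q) j
    rw [hvA i] at h
    exact h
  have hqj₀g : ∀ i, ‖((q j₀ : ℚ) : ℚ_[p i])‖ ≤ (p i : ℝ) ^ (g i) := fun i =>
    le_trans (hqnorm i j₀) (zpow_le_zpow_right₀ (hp1 i) (le_max_left _ _))
  obtain ⟨tM, htM⟩ := hcoset (q j₀) (hq j₀) hqj₀g
  have htM0 : tM ≠ 0 := by
    rintro rfl
    rw [Int.cast_zero, mul_zero] at htM
    exact hj₀ htM
  set M : ℕ := tM.natAbs with hMdef
  have hMpos : 0 < M := Int.natAbs_pos.mpr htM0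
  have hqM : |((q j₀ : ℚ) : ℝ)| = M * cR := by
    have h1 : ((q j₀ : ℚ) : ℝ) = cR * (tM : ℝ) := by
      rw [← hcQR]
      exact_mod_cast congrArg (fun z : ℚ => (z : ℝ)) htM
    rw [h1, abs_mul, abs_of_pos hcRpos, mul_comm]
    congr 1
    rw [hMdef, Nat.cast_natAbs, Int.cast_abs]
  -- empty / nonempty
  by_cases hWne : ∃ x : (Fin (n'+1) → ℝ) × (∀ i, Fin (n'+1) → ℚ_[p i]),
      (∀ j, 0 ≤ x.1 j ∧ x.1 j < 1) ∧ (∀ i j, ‖x.2 i j‖ ≤ 1) ∧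
      ∃ b : ℚ, IsZS (∏ i, p i) b ∧ |∑ j, x.1 j * ((q j : ℚ) : ℝ) + ((b : ℚ) : ℝ)| ≤ δR ∧
        ∀ i, ‖∑ j, x.2 i j * ((q j : ℚ) : ℚ_[p i]) + ((b : ℚ) : ℚ_[p i])‖ ≤ (p i : ℝ) ^ (l i)
  swap
  · refine le_trans (le_of_eq ?_) zero_le
    convert measure_empty (μ := (volume : Measure (Fin (n'+1) → ℝ)).prod (Measure.pi μn))
    ext x
    simp only [Set.mem_setOf_eq, Set.mem_empty_iff_false, iff_false]
    intro hx
    exact hWne ⟨x, hx⟩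
  obtain ⟨x₀, hbox₀, hdisk₀, b₀, hb₀zs, hb₀R, hb₀P⟩ := hWne
  -- translated sets
  set bQ : ℤ → ℚ := fun k => b₀ + cQ * k with hbQ
  have hbQcast : ∀ k : ℤ, ((bQ k : ℚ) : ℝ) = ((b₀ : ℚ) : ℝ) + cR * (k : ℝ) := by
    intro k
    rw [hbQ]
    push_cast
    rw [hcQR]
  set A : ℤ → Set (Fin (n'+1) → ℝ) := fun k =>
    {x1 | (∀ j, 0 ≤ x1 j ∧ x1 j < 1) ∧
      |∑ j, x1 j * ((q j : ℚ) : ℝ) + ((bQ k : ℚ) : ℝ)| ≤ δR} with hA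
  set Bi : ℤ → ∀ i : Fin s, Set (Fin (n'+1) → ℚ_[p i]) := fun k i =>
    {y | (∀ j, ‖y j‖ ≤ 1) ∧
      ‖∑ j, y j * ((q j : ℚ) : ℚ_[p i]) + ((bQ k : ℚ) : ℚ_[p i])‖ ≤ (p i : ℝ) ^ (l i)} with hBi
  -- covering
  refine le_trans (measure_mono (?_ : _ ⊆ ⋃ k : ℤ, (A k ×ˢ Set.univ.pi (Bi k)))) ?_
  · intro x hx
    obtain ⟨hbox, hdisk, b, hbzs, hbR, hbP⟩ := hx
    have hznorm : ∀ i, ‖((b - b₀ : ℚ) : ℚ_[p i])‖ ≤ (p i : ℝ) ^ (g i) := by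
      intro i
      set qc : Fin (n'+1) → ℚ_[p i] := fun j => ((q j : ℚ) : ℚ_[p i]) with hqc
      set S1 : ℚ_[p i] := ∑ j, x.2 i j * qc j + ((b : ℚ) : ℚ_[p i]) with hS1
      set S2 : ℚ_[p i] := ∑ j, x₀.2 i j * qc j + ((b₀ : ℚ) : ℚ_[p i]) with hS2
      set T : ℚ_[p i] := ∑ j, (x.2 i j - x₀.2 i j) * qc j with hT
      have hTsub : T = (∑ j, x.2 i j * qc j) - (∑ j, x₀.2 i j * qc j) := by
        rw [hT, ← Finset.sum_sub_distrib]
        exact Finset.sum_congr rfl fun j _ => by ring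
      have hexpr : ((b - b₀ : ℚ) : ℚ_[p i]) = (S1 - S2) - T := by
        rw [hS1, hS2, hTsub]
        push_cast
        ring
      rw [hexpr]
      have hub1 : ‖S1 - S2‖ ≤ max ‖S1‖ ‖S2‖ := by
        have h := Padic.nonarchimedean (q := S1) (r := -S2)
        simpa [sub_eq_add_neg] using h
      have hub2 : ‖(S1 - S2) - T‖ ≤ max ‖S1 - S2‖ ‖T‖ := by
        have h := Padic.nonarchimedean (q := S1 - S2) (r := -T)
        simpa [sub_eq_add_neg] using h
      have hTle : ‖T‖ ≤ (p i : ℝ) ^ (v i) := by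
        rw [hT]
        apply IsUltrametricDist.norm_sum_le_of_forall_le_of_nonneg
          (zpow_pos (hppos i) _).le
        intro j _
        rw [norm_mul]
        have hd : ‖x.2 i j - x₀.2 i j‖ ≤ 1 := by
          have h := Padic.nonarchimedean (q := x.2 i j) (r := -(x₀.2 i j))
          rw [← sub_eq_add_neg] at h
          refine le_trans h (max_le (hdisk i j) ?_)
          rw [norm_neg]
          exact hdisk₀ i j
        calc ‖x.2 i j - x₀.2 i j‖ * ‖qc j‖ ≤ 1 * ((p i : ℝ) ^ (v i)) :=
              mul_le_mul hd (hqnorm i j) (norm_nonneg _) zero_le_one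
          _ = (p i : ℝ) ^ (v i) := one_mul _
      have hS1le : ‖S1‖ ≤ (p i : ℝ) ^ (l i) := hbP i
      have hS2le : ‖S2‖ ≤ (p i : ℝ) ^ (l i) := hb₀P i
      refine le_trans hub2 (max_le (le_trans hub1 (max_le ?_ ?_)) ?_)
      · exact le_trans hS1le (zpow_le_zpow_right₀ (hp1 i) (le_max_right _ _))
      · exact le_trans hS2le (zpow_le_zpow_right₀ (hp1 i) (le_max_right _ _))
      · exact le_trans hTle (zpow_le_zpow_right₀ (hp1 i) (le_max_left _ _))
    obtain ⟨t, ht⟩ := hcoset (b - b₀) (IsZS_sub hPpos hbzs hb₀zs) hznorm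
    have hbt : bQ t = b := by
      have h2 : b - b₀ = cQ * t := ht
      show b₀ + cQ * (t:ℚ) = b
      linarith
    refine Set.mem_iUnion.mpr ⟨t, ?_⟩
    refine Set.mem_prod.mpr ⟨⟨hbox, ?_⟩, ?_⟩
    · rw [hbt]
      exact hbR
    · intro i _
      refine ⟨fun j => hdisk i j, ?_⟩
      rw [hbt]
      exact hbP i
  -- measure bound
  have hBbound : ∀ k : ℤ, (Measure.pi μn) (Set.univ.pi (Bi k))
      ≤ ENNReal.ofReal (∏ i, (p i : ℝ) ^ (l i) * (p i : ℝ) ^ (-(g i))) := by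
    intro k
    rw [Measure.pi_pi, ENNReal.ofReal_prod_of_nonneg (fun i _ => by positivity)]
    apply Finset.prod_le_prod'
    intro i _
    by_cases hlv : l i < v i
    · have hgv : g i = v i := max_eq_left hlv.le
      set kk : ℕ := (v i - l i).toNat with hkk
      have hkkz : (kk : ℤ) = v i - l i := Int.toNat_of_nonneg (by omega)
      have hsep : (p i : ℝ) ^ kk * ((p i : ℝ) ^ (l i)) ≤ ‖((q (j1 i) : ℚ) : ℚ_[p i])‖ := by
        rw [hvj i, ← zpow_natCast (p i : ℝ) kk, hkkz, ← zpow_add₀ (ne_of_gt (hppos i))]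
        apply le_of_eq
        congr 1
        omega
      have hb := padic_fiber_bound (μn i) (hμn i) (fun j => ((q j : ℚ) : ℚ_[p i])) (j1 i)
        (((bQ k : ℚ) : ℚ_[p i])) ((p i : ℝ) ^ (l i)) (zpow_pos (hppos i) _) kk hsep
      refine le_trans (le_of_eq ?_) (le_trans hb (le_of_eq ?_))
      · rfl
      · rw [hgv]
        have h1 : (p i : ℝ) ^ (l i) * (p i : ℝ) ^ (-(v i)) = ((p i : ℝ) ^ kk)⁻¹ := by
          rw [← zpow_add₀ (ne_of_gt (hppos i)), ← zpow_natCast (p i : ℝ) kk, hkkz, ← _root_.zpow_neg]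
          congr 1
          omega
        rw [h1, ENNReal.ofReal_inv_of_pos (pow_pos (hppos i) kk),
          ENNReal.ofReal_pow (hppos i).le, ENNReal.ofReal_natCast]
    · have hgl : g i = l i := max_eq_right (by omega)
      have h1 : μn i (Bi k i) ≤ 1 := by
        rw [← hμn i]
        apply measure_mono
        intro y hy
        exact hy.1
      refine le_trans h1 (le_of_eq ?_)
      rw [hgl, ← zpow_add₀ (ne_of_gt (hppos i))]
      simp
  -- real part
  have hAmeas : ∀ k : ℤ, MeasurableSet (A k) := by
    intro k
    have hsplit : A k = {x1 : Fin (n'+1) → ℝ | ∀ j, 0 ≤ x1 j ∧ x1 j < 1} ∩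
        {x1 : Fin (n'+1) → ℝ |
          |∑ j, x1 j * ((q j : ℚ) : ℝ) + ((bQ k : ℚ) : ℝ)| ≤ δR} := rfl
    rw [hsplit]
    apply MeasurableSet.inter
    · have hbox : {x1 : Fin (n'+1) → ℝ | ∀ j, 0 ≤ x1 j ∧ x1 j < 1}
          = Set.univ.pi (fun _ => Set.Ico (0:ℝ) 1) := by
        ext x1
        simp [Set.mem_pi, Set.mem_Ico]
      rw [hbox]
      exact MeasurableSet.univ_pi fun _ => measurableSet_Ico
    · have hcont : Continuous (fun x1 : Fin (n'+1) → ℝ =>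
          |∑ j, x1 j * ((q j : ℚ) : ℝ) + ((bQ k : ℚ) : ℝ)|) := by
        apply Continuous.abs
        exact (continuous_finset_sum _ fun j _ =>
          (continuous_apply j).mul continuous_const).add continuous_const
      exact measurableSet_le hcont.measurable measurable_const
  set ν' : Measure (Fin n' → ℝ) := Measure.pi fun _ => (volume : Measure ℝ) with hν'
  set e := MeasurableEquiv.piFinSuccAbove (fun _ : Fin (n'+1) => ℝ) j₀ with he
  have hmp : MeasurePreserving e (Measure.pi fun _ => (volume : Measure ℝ))
      ((volume : Measure ℝ).prod ν') :=
    measurePreserving_piFinSuccAbove (fun _ => (volume : Measure ℝ)) j₀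
  have hvolA : ∀ k, volume (A k) = ((volume : Measure ℝ).prod ν') (e.symm ⁻¹' A k) := by
    intro k
    have h1 : A k = e ⁻¹' (e.symm ⁻¹' A k) := by
      ext y
      simp [MeasurableEquiv.symm_apply_apply]
    conv_lhs => rw [MeasureTheory.volume_pi, h1]
    exact hmp.measure_preimage_emb (MeasurableEquiv.measurableEmbedding e) _
  have hSmeas : ∀ k : ℤ, MeasurableSet (e.symm ⁻¹' A k) :=
    fun k => e.symm.measurable (hAmeas k)
  have hslice : ∀ (k : ℤ) (x' : Fin n' → ℝ),
      ((fun t => (t, x')) ⁻¹' (e.symm ⁻¹' A k)) =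
        if ∀ j', 0 ≤ x' j' ∧ x' j' < 1 then
          {t : ℝ | t ∈ Set.Ico (0:ℝ) 1 ∧
            |t * ((q j₀ : ℚ) : ℝ) +
              ((∑ j', x' j' * ((q (j₀.succAbove j') : ℚ) : ℝ) + ((b₀ : ℚ) : ℝ)) + cR * (k:ℝ))| ≤ δR}
        else ∅ := by
    intro k x'
    ext t
    have hesymm : e.symm (t, x') = j₀.insertNth t x' := by
      rw [he]
      rfl
    simp only [Set.mem_preimage, hesymm]
    have hsum : ∑ j, (j₀.insertNth t x' : Fin (n'+1) → ℝ) j * ((q j : ℚ) : ℝ)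
        = t * ((q j₀ : ℚ) : ℝ) + ∑ j', x' j' * ((q (j₀.succAbove j') : ℚ) : ℝ) := by
      rw [Fin.sum_univ_succAbove (fun j => (j₀.insertNth t x' : Fin (n'+1) → ℝ) j * ((q j : ℚ) : ℝ)) j₀]
      congr 1
      · rw [Fin.insertNth_apply_same]
      · refine Finset.sum_congr rfl fun j' _ => ?_
        rw [Fin.insertNth_apply_succAbove]
    by_cases hbox' : ∀ j', 0 ≤ x' j' ∧ x' j' < 1
    · rw [if_pos hbox']
      show j₀.insertNth t x' ∈ A k ↔ _
      rw [hA]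
      simp only [Set.mem_setOf_eq, Set.mem_Ico]
      constructor
      · rintro ⟨hb, habs⟩
        have hbj := hb j₀
        rw [Fin.insertNth_apply_same] at hbj
        refine ⟨hbj, ?_⟩
        rw [hsum, hbQcast k] at habs
        have heq : t * ((q j₀ : ℚ) : ℝ) + ∑ j', x' j' * ((q (j₀.succAbove j') : ℚ) : ℝ)
              + (((b₀ : ℚ) : ℝ) + cR * (k:ℝ))
            = t * ((q j₀ : ℚ) : ℝ) +
              ((∑ j', x' j' * ((q (j₀.succAbove j') : ℚ) : ℝ) + ((b₀ : ℚ) : ℝ)) + cR * (k:ℝ)) := by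
          ring
        rw [heq] at habs
        exact habs
      · rintro ⟨htI, habs⟩
        constructor
        · intro j
          rcases eq_or_ne j j₀ with rfl | hne
          · rw [Fin.insertNth_apply_same]
            exact htI
          · obtain ⟨j', rfl⟩ := Fin.exists_succAbove_eq hne
            rw [Fin.insertNth_apply_succAbove]
            exact hbox' j'
        · rw [hsum, hbQcast k]
          have heq : t * ((q j₀ : ℚ) : ℝ) + ∑ j', x' j' * ((q (j₀.succAbove j') : ℚ) : ℝ)
                + (((b₀ : ℚ) : ℝ) + cR * (k:ℝ))
              = t * ((q j₀ : ℚ) : ℝ) +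
                ((∑ j', x' j' * ((q (j₀.succAbove j') : ℚ) : ℝ) + ((b₀ : ℚ) : ℝ)) + cR * (k:ℝ)) := by
            ring
          rw [heq]
          exact habs
    · rw [if_neg hbox']
      simp only [Set.mem_empty_iff_false, iff_false]
      intro hmem
      apply hbox'
      intro j'
      have hb := hmem.1 (j₀.succAbove j')
      rw [Fin.insertNth_apply_succAbove] at hb
      exact hb
  have hbox'set : {x' : Fin n' → ℝ | ∀ j', 0 ≤ x' j' ∧ x' j' < 1}
      = Set.univ.pi (fun _ => Set.Ico (0:ℝ) 1) := by
    ext x'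
    simp [Set.mem_pi, Set.mem_Ico]
  have hbox'meas : MeasurableSet {x' : Fin n' → ℝ | ∀ j', 0 ≤ x' j' ∧ x' j' < 1} := by
    rw [hbox'set]
    exact MeasurableSet.univ_pi fun _ => measurableSet_Ico
  have hAsum : ∑' k : ℤ, volume (A k) ≤ ENNReal.ofReal (2 * δR / cR) := by
    calc ∑' k : ℤ, volume (A k)
        = ∑' k : ℤ, ∫⁻ x', volume ((fun t => (t, x')) ⁻¹' (e.symm ⁻¹' A k)) ∂ν' := by
          refine tsum_congr fun k => ?_
          rw [hvolA k, Measure.prod_apply_symm (hSmeas k)]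
      _ = ∫⁻ x', ∑' k : ℤ, volume ((fun t => (t, x')) ⁻¹' (e.symm ⁻¹' A k)) ∂ν' := by
          rw [lintegral_tsum]
          intro k
          exact (measurable_measure_prodMk_right (hSmeas k)).aemeasurable
      _ ≤ ∫⁻ x', Set.indicator {x' : Fin n' → ℝ | ∀ j', 0 ≤ x' j' ∧ x' j' < 1}
            (fun _ => ENNReal.ofReal (2 * δR / cR)) x' ∂ν' := by
          apply lintegral_mono
          intro x'
          by_cases hbox' : ∀ j', 0 ≤ x' j' ∧ x' j' < 1
          · rw [Set.indicator_of_mem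
                (show x' ∈ {x' : Fin n' → ℝ | ∀ j', 0 ≤ x' j' ∧ x' j' < 1} from hbox')]
            calc ∑' k : ℤ, volume ((fun t => (t, x')) ⁻¹' (e.symm ⁻¹' A k))
                = ∑' k : ℤ, volume {t : ℝ | t ∈ Set.Ico (0:ℝ) 1 ∧
                    |t * ((q j₀ : ℚ) : ℝ) +
                      ((∑ j', x' j' * ((q (j₀.succAbove j') : ℚ) : ℝ) + ((b₀ : ℚ) : ℝ))
                        + cR * (k:ℝ))| ≤ δR} := by
                  refine tsum_congr fun k => ?_
                  rw [hslice k x', if_pos hbox']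
              _ ≤ ENNReal.ofReal (2 * δR / cR) :=
                  affine_tsum_bound ((q j₀ : ℚ) : ℝ)
                    (∑ j', x' j' * ((q (j₀.succAbove j') : ℚ) : ℝ) + ((b₀ : ℚ) : ℝ))
                    cR δR M hMpos hcRpos hqM hδRpos.le
          · rw [Set.indicator_of_notMem
                (show x' ∉ {x' : Fin n' → ℝ | ∀ j', 0 ≤ x' j' ∧ x' j' < 1} from hbox')]
            have h0 : ∀ k : ℤ, volume ((fun t => (t, x')) ⁻¹' (e.symm ⁻¹' A k)) = 0 := by
              intro k
              rw [hslice k x', if_neg hbox']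
              exact measure_empty
            simp [h0]
      _ = ENNReal.ofReal (2 * δR / cR) *
            ν' {x' : Fin n' → ℝ | ∀ j', 0 ≤ x' j' ∧ x' j' < 1} :=
          lintegral_indicator_const hbox'meas _
      _ = ENNReal.ofReal (2 * δR / cR) := by
          rw [hbox'set, hν', Measure.pi_pi]
          simp [Real.volume_Ico]
  -- combine
  calc ((volume : Measure (Fin (n'+1) → ℝ)).prod (Measure.pi μn))
        (⋃ k : ℤ, A k ×ˢ Set.univ.pi (Bi k))
      ≤ ∑' k : ℤ, ((volume : Measure (Fin (n'+1) → ℝ)).prod (Measure.pi μn))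
          (A k ×ˢ Set.univ.pi (Bi k)) := measure_iUnion_le _
    _ = ∑' k : ℤ, volume (A k) * (Measure.pi μn) (Set.univ.pi (Bi k)) := by
        refine tsum_congr fun k => ?_
        rw [Measure.prod_prod]
    _ ≤ ∑' k : ℤ, volume (A k) *
          ENNReal.ofReal (∏ i, (p i : ℝ) ^ (l i) * (p i : ℝ) ^ (-(g i))) := by
        refine ENNReal.tsum_le_tsum fun k => ?_
        exact mul_le_mul_right (hBbound k) _
    _ = (∑' k : ℤ, volume (A k)) *
          ENNReal.ofReal (∏ i, (p i : ℝ) ^ (l i) * (p i : ℝ) ^ (-(g i))) :=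
        ENNReal.tsum_mul_right
    _ ≤ ENNReal.ofReal (2 * δR / cR) *
          ENNReal.ofReal (∏ i, (p i : ℝ) ^ (l i) * (p i : ℝ) ^ (-(g i))) :=
        mul_le_mul_left hAsum _
    _ ≤ ENNReal.ofReal (2 * ((n'+1 : ℕ) : ℝ) * (δR * ∏ i, (p i : ℝ) ^ (l i))) := by
        rw [← ENNReal.ofReal_mul (by positivity)]
        apply ENNReal.ofReal_le_ofReal
        have hsplit : ∏ i, ((p i : ℝ) ^ (l i) * (p i : ℝ) ^ (-(g i)))
            = (∏ i, (p i : ℝ) ^ (l i)) * cR := by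
          rw [Finset.prod_mul_distrib, hcR]
        rw [hsplit]
        have hProdPos : 0 < ∏ i, (p i : ℝ) ^ (l i) :=
          Finset.prod_pos fun i _ => zpow_pos (hppos i) _
        have heq : 2 * δR / cR * ((∏ i, (p i : ℝ) ^ (l i)) * cR)
            = 2 * δR * ∏ i, (p i : ℝ) ^ (l i) := by
          field_simp
        rw [heq]
        have h1n : (1:ℝ) ≤ ((n'+1 : ℕ) : ℝ) := by
          have : (1:ℕ) ≤ n'+1 := by omega
          exact_mod_cast this
        nlinarith [mul_pos hδRpos hProdPos]
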